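/- arXiv:2506.04582 — 2 statements merged into one kernel-verified Lean document; each statement's English description precedes it below -/
import Mathlib

section
/- Let d ≥ 1 and n ≥ 2 be integers, let v ∈ ℤ^d have every entry coprime to n, and let δ ∈ ℤ^d. Then the sum over all unordered pairs {x,y} of distinct points of L(n,v,δ) of w(x−y)^{−50} equals (n/2)·Σ_{i=1}^{n−1} (Σ_{k=1}^d w(i·v_k/n)²)^{−25}; equivalently, the approximated wrap-around separation criterion c_WA(L(n,v,δ)) = [Σ_{x≠y pairs} w(x−y)^{−50}]^{1/50} equals [(n/2)·Σ_{i=1}^{n−1} (Σ_{k=1}^d w(i·v_k/n)²)^{−25}]^{1/50}. -/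
open Finset

/-- Distance from a real number to the nearest integer: w(t) = min over z in ZZ of |t - z|. -/
noncomputable def nid (t : ℝ) : ℝ := ⨅ z : ℤ, |t - (z : ℝ)|

/-- Wrap-around distance on ℝ^d. -/
noncomputable def wdist {d : ℕ} (u : Fin d → ℝ) : ℝ := Real.sqrt (∑ k, nid (u k) ^ 2)

/-- Lattice-based Latin hypercube design
L(n,v,δ) = { z + i·v/n + δ/n + 1_d/(2n) : z ∈ ℤ^d, i ∈ ℤ } ∩ [0,1]^d. -/
def LHDset (d n : ℕ) (v : Fin d → ℤ) (δ : Fin d → ℝ) : Set (Fin d → ℝ) :=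
  {x | (∃ (z : Fin d → ℤ) (i : ℤ),
          x = fun k => (z k : ℝ) + (i : ℝ) * (v k : ℝ) / n + δ k / n + 1 / (2 * n)) ∧
       ∀ k, x k ∈ Set.Icc (0 : ℝ) 1}

lemma nid_eq_round (t : ℝ) : nid t = |t - round t| := by
  unfold nid
  apply le_antisymm
  · exact ciInf_le ⟨0, by rintro x ⟨z, rfl⟩; positivity⟩ (round t)
  · exact le_ciInf fun z => round_le t z

lemma nid_int_add (t : ℝ) (m : ℤ) : nid (t + m) = nid t := by
  rw [nid_eq_round, nid_eq_round, round_add_intCast]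
  push_cast
  congr 1
  ring

lemma nid_frac_congr {n : ℕ} (hn : 0 < n) {a b : ℤ} (h : a % (n:ℤ) = b % (n:ℤ)) :
    nid ((a : ℝ) / n) = nid ((b : ℝ) / n) := by
  obtain ⟨q, hq⟩ : (n:ℤ) ∣ a - b := Int.ModEq.dvd (Int.ModEq.symm h)
  have hn' : (n:ℝ) ≠ 0 := by positivity
  have e : (a : ℝ) / n = (b : ℝ) / n + q := by
    have : (a : ℝ) = b + n * q := by exact_mod_cast congrArg (fun x : ℤ => (x:ℝ)) (by linarith : a = b + n * q)
    rw [this]; field_simp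
  rw [e, nid_int_add]

noncomputable def LHDpt (d n : ℕ) (v δ : Fin d → ℤ) (i : Fin n) : Fin d → ℝ :=
  fun k => ((((i.val : ℤ) * v k + δ k) % (n:ℤ) : ℤ) : ℝ) / n + 1 / (2 * n)

noncomputable def Dzf (d n : ℕ) (v : Fin d → ℤ) (m : ℤ) : ℝ :=
  ∑ k, nid ((m : ℝ) * (v k : ℝ) / n) ^ 2

lemma Dzf_congr {d n : ℕ} (hn : 0 < n) (v : Fin d → ℤ) {a b : ℤ}
    (h : a % (n:ℤ) = b % (n:ℤ)) : Dzf d n v a = Dzf d n v b := by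
  refine Finset.sum_congr rfl fun k _ => ?_
  have h2 : (a * v k) % (n:ℤ) = (b * v k) % (n:ℤ) := Int.ModEq.mul_right (v k) h
  have h3 := nid_frac_congr hn h2
  push_cast at h3
  rw [h3]

lemma emod_sub_emod (n a b : ℤ) : (a - b % n) % n = (a - b) % n := by
  conv_lhs => rw [Int.sub_emod]
  rw [Int.emod_emod_of_dvd _ dvd_rfl, ← Int.sub_emod]

lemma LHDpt_inj {d n : ℕ} (hd : 1 ≤ d) (hn : 2 ≤ n) (v δ : Fin d → ℤ)
    (hco : ∀ k, IsCoprime (v k) (n : ℤ)) : Function.Injective (LHDpt d n v δ) := by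
  intro i j hij
  set k0 : Fin d := ⟨0, hd⟩
  have h1 := congrFun hij k0
  simp only [LHDpt] at h1
  have hnR : (0:ℝ) < n := by positivity
  have h3 : ((i.val : ℤ) * v k0 + δ k0) % (n:ℤ) = ((j.val : ℤ) * v k0 + δ k0) % (n:ℤ) := by
    field_simp at h1
    have h1' : ((((i.val : ℤ) * v k0 + δ k0) % (n:ℤ) : ℤ) : ℝ) = ((((j.val : ℤ) * v k0 + δ k0) % (n:ℤ) : ℤ) : ℝ) := by linarith
    exact_mod_cast h1'
  have h4 : (n:ℤ) ∣ ((i.val : ℤ) - (j.val : ℤ)) * v k0 := by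
    have := Int.ModEq.dvd (h3 : Int.ModEq (n:ℤ) _ _)
    have e : ((j.val : ℤ) * v k0 + δ k0) - ((i.val : ℤ) * v k0 + δ k0)
        = ((j.val : ℤ) - (i.val : ℤ)) * v k0 := by ring
    rw [e] at this
    rw [show ((i.val:ℤ) - (j.val:ℤ)) * v k0 = -(((j.val:ℤ) - (i.val:ℤ)) * v k0) by ring]
    exact dvd_neg.mpr this
  have h5 : (n:ℤ) ∣ (i.val : ℤ) - (j.val : ℤ) := ((hco k0).symm).dvd_of_dvd_mul_right h4
  have h6 : (i.val : ℤ) - (j.val : ℤ) = 0 := by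
    refine Int.eq_zero_of_abs_lt_dvd h5 ?_
    rw [abs_lt]
    have := i.isLt; have := j.isLt
    omega
  exact Fin.ext (by omega)

lemma LHDpt_mem {d n : ℕ} (hn : 2 ≤ n) (v δ : Fin d → ℤ) (i : Fin n) :
    LHDpt d n v δ i ∈ LHDset d n v (fun k => (δ k : ℝ)) := by
  have hn0 : (0:ℤ) < n := by exact_mod_cast Nat.lt_of_lt_of_le Nat.zero_lt_two hn
  have hnR : (0:ℝ) < n := by positivity
  have hnR' : (n:ℝ) ≠ 0 := ne_of_gt hnR
  constructor
  · refine ⟨fun k => -(((i.val : ℤ) * v k + δ k) / n), (i.val : ℤ), ?_⟩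
    funext k
    show ((((i.val : ℤ) * v k + δ k) % (n:ℤ) : ℤ) : ℝ) / n + 1 / (2 * n) = _
    rw [Int.emod_def]
    push_cast
    field_simp
    ring
  · intro k
    set a := (i.val : ℤ) * v k + δ k with ha
    have h0 : 0 ≤ a % n := Int.emod_nonneg a (ne_of_gt hn0)
    have h1 : a % n < n := Int.emod_lt_of_pos a hn0
    have h0R : (0:ℝ) ≤ ((a % n : ℤ) : ℝ) := by exact_mod_cast h0
    have h1R : ((a % n : ℤ) : ℝ) ≤ (n:ℝ) - 1 := by exact_mod_cast (by omega : a % n ≤ (n:ℤ) - 1)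
    constructor
    · show (0:ℝ) ≤ ((a % n : ℤ) : ℝ) / n + 1 / (2 * n)
      have : (0:ℝ) ≤ 1 / (2 * (n:ℝ)) := by positivity
      have := div_nonneg h0R hnR.le
      linarith
    · show ((a % n : ℤ) : ℝ) / n + 1 / (2 * n) ≤ 1
      have key : ((a % n : ℤ) : ℝ) / n + 1 / (2 * n) ≤ ((n:ℝ) - 1) / n + 1 / (2 * n) := by
        gcongr
      have e : ((n:ℝ) - 1) / n + 1 / (2 * n) = 1 - 1 / (2 * n) := by
        field_simp
        ring
      have : (0:ℝ) < 1 / (2 * n) := by positivity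
      linarith [key, e.le]

lemma LHDset_eq {d n : ℕ} (hd : 1 ≤ d) (hn : 2 ≤ n) (v δ : Fin d → ℤ) :
    LHDset d n v (fun k => (δ k : ℝ)) = Set.range (LHDpt d n v δ) := by
  have hn0 : (0:ℤ) < n := by exact_mod_cast Nat.lt_of_lt_of_le Nat.zero_lt_two hn
  have hnR : (0:ℝ) < n := by positivity
  have hnR' : (n:ℝ) ≠ 0 := ne_of_gt hnR
  ext x
  constructor
  · rintro ⟨⟨z, i0, rfl⟩, hbox⟩
    have hmlt : (i0 % (n:ℤ)).toNat < n := by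
      have := Int.emod_nonneg i0 (ne_of_gt hn0); have := Int.emod_lt_of_pos i0 hn0; omega
    refine ⟨⟨(i0 % (n:ℤ)).toNat, hmlt⟩, ?_⟩
    funext k
    set A := (n:ℤ) * z k + i0 * v k + δ k with hA
    have hxk : (z k : ℝ) + (i0 : ℝ) * (v k : ℝ) / n + (δ k : ℝ) / n + 1 / (2 * n)
        = (A : ℝ) / n + 1 / (2 * n) := by
      rw [hA]; push_cast; field_simp
    obtain ⟨hb0, hb1⟩ := hbox k
    simp only [hxk] at hb0 hb1
    have e1 : ((A : ℝ) / n + 1 / (2 * n)) * n = A + 1/2 := by field_simp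
    have hA0 : 0 ≤ A := by
      have h3 : (0:ℝ) ≤ (A:ℝ) + 1/2 := by
        have := mul_nonneg hb0 (le_of_lt hnR)
        rw [e1] at this; exact this
      have hr : (-1:ℝ) < (A:ℝ) := by linarith
      have hz : (-1:ℤ) < A := by exact_mod_cast hr
      omega
    have hAn : A < n := by
      have h4 : (A:ℝ) + 1/2 ≤ n := by
        have := mul_le_mul_of_nonneg_right hb1 (le_of_lt hnR)
        rw [e1, one_mul] at this; exact this
      have : (A:ℝ) < n := by linarith
      exact_mod_cast this
    have hAe : A % (n:ℤ) = A := Int.emod_eq_of_lt hA0 hAn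
    have hmval : (((i0 % (n:ℤ)).toNat : ℤ)) = i0 % n := Int.toNat_of_nonneg (Int.emod_nonneg i0 (ne_of_gt hn0))
    have hkey : (((i0 % (n:ℤ)).toNat : ℤ) * v k + δ k) % (n:ℤ) = A := by
      rw [hmval]
      have m1 : (i0 % (n:ℤ)) % n = i0 % n := Int.emod_emod_of_dvd _ dvd_rfl
      have m2 : ((i0 % (n:ℤ)) * v k + δ k) % n = (i0 * v k + δ k) % n :=
        Int.ModEq.add_right (δ k) (Int.ModEq.mul_right (v k) m1)
      have m3 : (i0 * v k + δ k) % n = A % n := by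
        rw [hA, show (n:ℤ) * z k + i0 * v k + δ k = (i0 * v k + δ k) + (n:ℤ) * z k by ring,
          Int.add_mul_emod_self_left]
      rw [m2, m3, hAe]
    show LHDpt d n v δ _ k = _
    simp only [LHDpt]
    rw [hkey, hxk]
  · rintro ⟨i, rfl⟩
    exact LHDpt_mem hn v δ i

lemma pair_wdist {d n : ℕ} (hn : 2 ≤ n) (v δ : Fin d → ℤ) (i j : Fin n) :
    wdist (LHDpt d n v δ i - LHDpt d n v δ j) ^ 50
      = Dzf d n v ((i.val : ℤ) - (j.val : ℤ)) ^ 25 := by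
  have hn0 : 0 < n := by omega
  have hnZ : (0:ℤ) < n := by exact_mod_cast hn0
  have hs : ∀ k, nid ((LHDpt d n v δ i - LHDpt d n v δ j) k)
      = nid ((((i.val : ℤ) - (j.val : ℤ) : ℤ) : ℝ) * (v k : ℝ) / n) := by
    intro k
    have e1 : (LHDpt d n v δ i - LHDpt d n v δ j) k
        = (((((i.val : ℤ) * v k + δ k) % (n:ℤ)) - (((j.val : ℤ) * v k + δ k) % (n:ℤ)) : ℤ) : ℝ) / n := by
      simp only [Pi.sub_apply, LHDpt]
      push_cast
      ring
    rw [e1]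
    have hmod : ((((i.val : ℤ) * v k + δ k) % (n:ℤ)) - (((j.val : ℤ) * v k + δ k) % (n:ℤ))) % (n:ℤ)
        = (((i.val : ℤ) - (j.val : ℤ)) * v k) % (n:ℤ) := by
      rw [← Int.sub_emod]
      congr 1
      ring
    have h2 := nid_frac_congr hn0 hmod
    rw [h2]
    congr 1
    push_cast
    ring
  have hnn : 0 ≤ ∑ k, nid ((LHDpt d n v δ i - LHDpt d n v δ j) k) ^ 2 :=
    Finset.sum_nonneg fun k _ => sq_nonneg _
  unfold wdist
  rw [show (50:ℕ) = 2 * 25 from rfl, pow_mul, Real.sq_sqrt hnn]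
  unfold Dzf
  congr 1
  exact Finset.sum_congr rfl fun k _ => by rw [hs k]

/-- the sum over unordered pairs of distinct points of L(n,v,δ) of
w(x−y)^{−50} equals (n/2)·Σ_{i=1}^{n−1} (Σ_k w(i·v_k/n)²)^{−25}; equivalently for
the criterion c_WA, the corresponding 1/50-th powers are equal. -/
theorem stmt_4 (d n : ℕ) (hd : 1 ≤ d) (hn : 2 ≤ n) (v δ : Fin d → ℤ)
    (hco : ∀ k, IsCoprime (v k) (n : ℤ))
    (S : Set (Fin d → ℝ)) (hS : S = LHDset d n v (fun k => (δ k : ℝ))) :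
    (1 / 2 : ℝ) * ∑ᶠ x ∈ S, ∑ᶠ y ∈ S, (if x = y then 0 else (wdist (x - y) ^ 50)⁻¹)
        = (n / 2 : ℝ) * ∑ i ∈ Finset.Icc 1 (n - 1),
            ((∑ k, nid ((i : ℝ) * (v k : ℝ) / n) ^ 2) ^ 25)⁻¹ ∧
    ((1 / 2 : ℝ) * ∑ᶠ x ∈ S, ∑ᶠ y ∈ S,
        (if x = y then 0 else (wdist (x - y) ^ 50)⁻¹)) ^ ((1 : ℝ) / 50)
      = ((n / 2 : ℝ) * ∑ i ∈ Finset.Icc 1 (n - 1),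
            ((∑ k, nid ((i : ℝ) * (v k : ℝ) / n) ^ 2) ^ 25)⁻¹) ^ ((1 : ℝ) / 50) := by
  have hn0 : 0 < n := by omega
  have hnZ : (0:ℤ) < n := by exact_mod_cast hn0
  set P := LHDpt d n v δ with hP
  have hinj : Function.Injective P := LHDpt_inj hd hn v δ hco
  have hset : S = ↑(Finset.image P Finset.univ) := by
    rw [hS, LHDset_eq hd hn v δ]
    simp [hP]
  have hsum : ∑ᶠ x ∈ S, ∑ᶠ y ∈ S, (if x = y then (0:ℝ) else (wdist (x - y) ^ 50)⁻¹)
      = ∑ i : Fin n, ∑ j : Fin n, (if P i = P j then (0:ℝ) else (wdist (P i - P j) ^ 50)⁻¹) := by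
    rw [hset, finsum_mem_coe_finset,
      Finset.sum_image (fun a _ b _ h => hinj h)]
    refine Finset.sum_congr rfl fun i _ => ?_
    rw [finsum_mem_coe_finset, Finset.sum_image (fun a _ b _ h => hinj h)]
  have hrow : ∀ i : Fin n, ∑ j : Fin n, (if P i = P j then (0:ℝ) else (wdist (P i - P j) ^ 50)⁻¹)
      = ∑ m ∈ Finset.Icc 1 (n-1), (Dzf d n v (m : ℤ) ^ 25)⁻¹ := by
    intro i
    have h1 : ∑ j : Fin n, (if P i = P j then (0:ℝ) else (wdist (P i - P j) ^ 50)⁻¹)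
        = ∑ j ∈ Finset.univ.erase i, (Dzf d n v ((i.val : ℤ) - (j.val : ℤ)) ^ 25)⁻¹ := by
      rw [← Finset.sum_erase Finset.univ
        (f := fun j => if P i = P j then (0:ℝ) else (wdist (P i - P j) ^ 50)⁻¹)
        (a := i) (by simp)]
      refine Finset.sum_congr rfl fun j hj => ?_
      have hji : j ≠ i := (Finset.mem_erase.mp hj).1
      rw [if_neg (fun h => hji ((hinj h).symm)), pair_wdist hn v δ i j]
    rw [h1]
    refine Finset.sum_nbij' (i := fun j => ((((i.val:ℤ) - (j.val:ℤ)) % (n:ℤ)).toNat))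
      (j := fun m => (⟨(((i.val:ℤ) - (m:ℤ)) % (n:ℤ)).toNat, by
        have := Int.emod_nonneg ((i.val:ℤ) - (m:ℤ)) (ne_of_gt hnZ)
        have := Int.emod_lt_of_pos ((i.val:ℤ) - (m:ℤ)) hnZ
        omega⟩ : Fin n)) ?_ ?_ ?_ ?_ ?_
    · intro j hj
      have hji : j ≠ i := (Finset.mem_erase.mp hj).1
      have h0 := Int.emod_nonneg ((i.val:ℤ) - (j.val:ℤ)) (ne_of_gt hnZ)
      have h1' := Int.emod_lt_of_pos ((i.val:ℤ) - (j.val:ℤ)) hnZ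
      have hne : ((i.val:ℤ) - (j.val:ℤ)) % (n:ℤ) ≠ 0 := by
        intro h
        have hdvd : (n:ℤ) ∣ (i.val:ℤ) - (j.val:ℤ) := Int.dvd_of_emod_eq_zero h
        have hz := Int.eq_zero_of_abs_lt_dvd hdvd
          (by rw [abs_lt]; have := i.isLt; have := j.isLt; omega)
        exact hji (Fin.ext (by omega)).symm
      rw [Finset.mem_Icc]
      omega
    · intro m hm
      rw [Finset.mem_Icc] at hm
      rw [Finset.mem_erase]
      refine ⟨?_, Finset.mem_univ _⟩
      intro h
      have hv : ((((i.val:ℤ) - (m:ℤ)) % (n:ℤ)).toNat) = i.val := congrArg Fin.val h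
      have h0 := Int.emod_nonneg ((i.val:ℤ) - (m:ℤ)) (ne_of_gt hnZ)
      have hvz : ((i.val:ℤ) - (m:ℤ)) % (n:ℤ) = (i.val:ℤ) := by omega
      have hiv : (i.val:ℤ) % (n:ℤ) = (i.val:ℤ) :=
        Int.emod_eq_of_lt (Int.natCast_nonneg _) (by exact_mod_cast i.isLt)
      have hmod : ((i.val:ℤ) - (m:ℤ)) % (n:ℤ) = (i.val:ℤ) % (n:ℤ) := by rw [hvz, hiv]
      have hdvd : (n:ℤ) ∣ (i.val:ℤ) - ((i.val:ℤ) - (m:ℤ)) := Int.ModEq.dvd hmod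
      have hm0 : (m:ℤ) = 0 := by
        have e : (i.val:ℤ) - ((i.val:ℤ) - (m:ℤ)) = (m:ℤ) := by ring
        rw [e] at hdvd
        exact Int.eq_zero_of_abs_lt_dvd hdvd (by rw [abs_lt]; omega)
      omega
    · intro j hj
      apply Fin.ext
      have h0 := Int.emod_nonneg ((i.val:ℤ) - (j.val:ℤ)) (ne_of_gt hnZ)
      have e1 : (((((i.val:ℤ) - (j.val:ℤ)) % (n:ℤ)).toNat : ℤ))
          = ((i.val:ℤ) - (j.val:ℤ)) % (n:ℤ) := Int.toNat_of_nonneg h0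
      show ((((i.val:ℤ) - (((((i.val:ℤ) - (j.val:ℤ)) % (n:ℤ)).toNat : ℕ):ℤ)) % (n:ℤ)).toNat) = j.val
      rw [e1, emod_sub_emod, show (i.val:ℤ) - ((i.val:ℤ) - (j.val:ℤ)) = (j.val:ℤ) by ring,
        Int.emod_eq_of_lt (Int.natCast_nonneg _) (by exact_mod_cast j.isLt)]
      omega
    · intro m hm
      rw [Finset.mem_Icc] at hm
      have h0 := Int.emod_nonneg ((i.val:ℤ) - (m:ℤ)) (ne_of_gt hnZ)
      show ((((i.val:ℤ) - (((((i.val:ℤ) - (m:ℤ)) % (n:ℤ)).toNat : ℕ):ℤ)) % (n:ℤ)).toNat) = m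
      rw [Int.toNat_of_nonneg h0, emod_sub_emod,
        show (i.val:ℤ) - ((i.val:ℤ) - (m:ℤ)) = (m:ℤ) by ring,
        Int.emod_eq_of_lt (Int.natCast_nonneg _) (by exact_mod_cast (by omega : m < n))]
      omega
    · intro j hj
      have h0 := Int.emod_nonneg ((i.val:ℤ) - (j.val:ℤ)) (ne_of_gt hnZ)
      have e1 : (((((i.val:ℤ) - (j.val:ℤ)) % (n:ℤ)).toNat : ℤ))
          = ((i.val:ℤ) - (j.val:ℤ)) % (n:ℤ) := Int.toNat_of_nonneg h0
      have e2 : Dzf d n v ((((((i.val:ℤ) - (j.val:ℤ)) % (n:ℤ)).toNat : ℕ)) : ℤ)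
          = Dzf d n v ((i.val:ℤ) - (j.val:ℤ)) := by
        rw [e1]
        exact Dzf_congr hn0 v (Int.emod_emod_of_dvd _ dvd_rfl)
      rw [e2]
  have hC : ∑ i : Fin n, ∑ j : Fin n, (if P i = P j then (0:ℝ) else (wdist (P i - P j) ^ 50)⁻¹)
      = n * ∑ m ∈ Finset.Icc 1 (n-1), (Dzf d n v (m:ℤ) ^ 25)⁻¹ := by
    rw [Finset.sum_congr rfl fun i _ => hrow i, Finset.sum_const, Finset.card_univ,
      Fintype.card_fin, nsmul_eq_mul]
  have hR : ∑ m ∈ Finset.Icc 1 (n-1), (Dzf d n v (m:ℤ) ^ 25)⁻¹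
      = ∑ m ∈ Finset.Icc 1 (n-1), ((∑ k, nid ((m : ℝ) * (v k : ℝ) / n) ^ 2) ^ 25)⁻¹ := by
    refine Finset.sum_congr rfl fun m _ => ?_
    unfold Dzf
    norm_num
  have main : (1 / 2 : ℝ) * ∑ᶠ x ∈ S, ∑ᶠ y ∈ S, (if x = y then 0 else (wdist (x - y) ^ 50)⁻¹)
      = (n / 2 : ℝ) * ∑ i ∈ Finset.Icc 1 (n - 1),
          ((∑ k, nid ((i : ℝ) * (v k : ℝ) / n) ^ 2) ^ 25)⁻¹ := by
    rw [hsum, hC, hR]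
    ring
  exact ⟨main, by rw [main]⟩
end

section
/- Let d ≥ 1 and n ≥ 1 be integers, let v ∈ ℤ^d have every entry coprime to n, and let δ ∈ ℤ^d. Then (1/n²)·Σ_{x ∈ L(n,v,δ)} Σ_{y ∈ L(n,v,δ)} Π_{k=1}^d (1.25 + w(x_k − y_k + 1/2)²) = (1/n)·Σ_{i=1}^{n} Π_{k=1}^d (1.25 + w(i·v_k/n − 1/2)²); consequently the squared wrap-around discrepancy satisfies c_WD(L(n,v,δ))² = (1/n)·Σ_{i=1}^{n} Π_{k=1}^d (1.25 + w(i·v_k/n − 1/2)²) − (4/3)^d. -/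
open Finset

lemma nid_add_int (t : ℝ) (z : ℤ) : nid (t + z) = nid t := by
  unfold nid
  rw [← (Equiv.addRight z).iInf_comp (g := fun w : ℤ => |t + z - (w : ℝ)|)]
  congr 1; ext w
  simp only [Equiv.coe_addRight]
  push_cast
  ring_nf

lemma nid_eq_of_int_sub {a b : ℝ} (z : ℤ) (h : a = b + z) : nid a = nid b := by
  rw [h, nid_add_int]

/-- The single-index summand. -/
noncomputable def gfun (d n : ℕ) (v : Fin d → ℤ) (m : ℤ) : ℝ :=
  ∏ k, ((1.25:ℝ) + nid ((m : ℝ) * v k / n + 1/2) ^ 2)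

lemma gfun_shift (d n : ℕ) (v : Fin d → ℤ) (hn : n ≠ 0) (m t : ℤ) :
    gfun d n v (m + n * t) = gfun d n v m := by
  unfold gfun
  refine Finset.prod_congr rfl fun k _ => ?_
  congr 2
  apply nid_eq_of_int_sub (t * v k)
  have hn' : (n:ℝ) ≠ 0 := Nat.cast_ne_zero.mpr hn
  push_cast
  field_simp
  ring

lemma gfun_mod (d n : ℕ) (v : Fin d → ℤ) (hn : n ≠ 0) (m : ℤ) :
    gfun d n v m = gfun d n v (m % n) := by
  conv_lhs => rw [← Int.emod_add_mul_ediv m n]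
  exact gfun_shift d n v hn _ _

lemma gfun_zmod (d n : ℕ) (v : Fin d → ℤ) [NeZero n] (m : ℤ) :
    gfun d n v m = gfun d n v ((m : ZMod n).val : ℤ) := by
  rw [gfun_mod d n v (NeZero.ne n), ZMod.val_intCast]

lemma sum_zmod_range (n : ℕ) [NeZero n] (H : ZMod n → ℝ) :
    ∑ j ∈ Finset.range n, H (j : ZMod n) = ∑ a : ZMod n, H a := by
  refine Finset.sum_nbij' (fun j => (j : ZMod n)) (fun a => a.val) ?_ ?_ ?_ ?_ ?_
  · intro a _; exact Finset.mem_univ _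
  · intro a _; exact Finset.mem_range.mpr a.val_lt
  · intro j hj; exact ZMod.val_cast_of_lt (Finset.mem_range.mp hj)
  · intro a _; exact ZMod.natCast_rightInverse a
  · intro j _; rfl

lemma sum_zmod_icc (n : ℕ) [NeZero n] (H : ZMod n → ℝ) :
    ∑ j ∈ Finset.Icc 1 n, H (j : ZMod n) = ∑ a : ZMod n, H a := by
  have hn : 1 ≤ n := Nat.one_le_iff_ne_zero.mpr (NeZero.ne n)
  refine Finset.sum_nbij' (fun j => (j : ZMod n)) (fun a => if a.val = 0 then n else a.val)
    ?_ ?_ ?_ ?_ ?_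
  · intro a _; exact Finset.mem_univ _
  · intro a _
    by_cases h : a.val = 0 <;> simp only [h, if_true, if_false, Finset.mem_Icc]
    · omega
    · have := a.val_lt; omega
  · intro j hj
    rw [Finset.mem_Icc] at hj
    by_cases h : j = n
    · subst h; simp [ZMod.natCast_self]
    · have hlt : j < n := by omega
      rw [ZMod.val_cast_of_lt hlt]
      have : j ≠ 0 := by omega
      simp [this]
  · intro a _
    by_cases h : a.val = 0
    · simp only [h, if_true]
      rw [ZMod.natCast_self]
      have : a = 0 := by
        have := ZMod.natCast_rightInverse (n := n) a
        rw [← this, h]; simp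
      rw [this]
    · simp only [h, if_false]
      exact ZMod.natCast_rightInverse a
  · intro j _; rfl

lemma sum_gfun_shifted (d n : ℕ) (v : Fin d → ℤ) [NeZero n] (c : ℤ) :
    ∑ j ∈ Finset.range n, gfun d n v (c - j) = ∑ m ∈ Finset.range n, gfun d n v m := by
  set G : ZMod n → ℝ := fun a => gfun d n v (a.val : ℤ) with hG
  have hg : ∀ m : ℤ, gfun d n v m = G (m : ZMod n) := fun m => gfun_zmod d n v m
  calc ∑ j ∈ Finset.range n, gfun d n v (c - j)
      = ∑ j ∈ Finset.range n, G ((c : ZMod n) - (j : ZMod n)) := by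
        refine Finset.sum_congr rfl fun j _ => ?_
        rw [hg]; congr 1; push_cast; ring
    _ = ∑ a : ZMod n, G ((c : ZMod n) - a) :=
        sum_zmod_range n (fun a => G ((c : ZMod n) - a))
    _ = ∑ a : ZMod n, G a := Equiv.sum_comp (Equiv.subLeft ((c : ZMod n))) G
    _ = ∑ m ∈ Finset.range n, G ((m : ℕ) : ZMod n) := (sum_zmod_range n G).symm
    _ = ∑ m ∈ Finset.range n, gfun d n v m := by
        refine Finset.sum_congr rfl fun m _ => ?_
        rw [hg ((m : ℕ) : ℤ)]; congr 1; push_cast; ring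

lemma sum_gfun_icc (d n : ℕ) (v : Fin d → ℤ) [NeZero n] :
    ∑ i ∈ Finset.Icc 1 n, gfun d n v i = ∑ m ∈ Finset.range n, gfun d n v m := by
  set G : ZMod n → ℝ := fun a => gfun d n v (a.val : ℤ) with hG
  have hg : ∀ m : ℤ, gfun d n v m = G (m : ZMod n) := fun m => gfun_zmod d n v m
  calc ∑ i ∈ Finset.Icc 1 n, gfun d n v i
      = ∑ i ∈ Finset.Icc 1 n, G ((i : ℕ) : ZMod n) := by
        refine Finset.sum_congr rfl fun i _ => ?_
        rw [hg ((i : ℕ) : ℤ)]; congr 1; push_cast; ring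
    _ = ∑ a : ZMod n, G a := sum_zmod_icc n G
    _ = ∑ m ∈ Finset.range n, G ((m : ℕ) : ZMod n) := (sum_zmod_range n G).symm
    _ = ∑ m ∈ Finset.range n, gfun d n v m := by
        refine Finset.sum_congr rfl fun m _ => ?_
        rw [hg ((m : ℕ) : ℤ)]; congr 1; push_cast; ring

/-- The canonical point of the design indexed by `m`. -/
noncomputable def pt (d n : ℕ) (v δ : Fin d → ℤ) (m : ℕ) : Fin d → ℝ :=
  fun k => (((((m : ℤ) * v k + δ k) % (n : ℤ) : ℤ) : ℝ) + 1/2) / n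

/-- the double-sum formula for the wrap-around discrepancy of L(n,v,δ)
reduces to a single sum over i = 1,…,n; consequently
c_WD(L(n,v,δ))² = (1/n)·Σ_{i=1}^{n} Π_k (1.25 + w(i·v_k/n − 1/2)²) − (4/3)^d. -/
theorem stmt_6 (d n : ℕ) (hd : 1 ≤ d) (hn : 1 ≤ n) (v δ : Fin d → ℤ)
    (hco : ∀ k, IsCoprime (v k) (n : ℤ))
    (S : Set (Fin d → ℝ)) (hS : S = LHDset d n v (fun k => (δ k : ℝ))) :
    (1 / (n : ℝ) ^ 2) * ∑ᶠ x ∈ S, ∑ᶠ y ∈ S,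
        ∏ k, ((1.25 : ℝ) + nid (x k - y k + 1 / 2) ^ 2)
      = (1 / (n : ℝ)) * ∑ i ∈ Finset.Icc 1 n,
          ∏ k, ((1.25 : ℝ) + nid ((i : ℝ) * (v k : ℝ) / n - 1 / 2) ^ 2) ∧
    (1 / (n : ℝ) ^ 2) * (∑ᶠ x ∈ S, ∑ᶠ y ∈ S,
        ∏ k, ((1.25 : ℝ) + nid (x k - y k + 1 / 2) ^ 2)) - (4 / 3 : ℝ) ^ d
      = (1 / (n : ℝ)) * (∑ i ∈ Finset.Icc 1 n,
          ∏ k, ((1.25 : ℝ) + nid ((i : ℝ) * (v k : ℝ) / n - 1 / 2) ^ 2)) - (4 / 3 : ℝ) ^ d := by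
  classical
  have hn0 : n ≠ 0 := by omega
  haveI : NeZero n := ⟨hn0⟩
  have hnpos : (0:ℤ) < (n:ℤ) := by exact_mod_cast Nat.pos_of_ne_zero hn0
  have hnR : (0:ℝ) < (n:ℝ) := by exact_mod_cast Nat.pos_of_ne_zero hn0
  have hnR' : (n:ℝ) ≠ 0 := ne_of_gt hnR
  set T : Finset (Fin d → ℝ) := (Finset.range n).image (pt d n v δ) with hT
  -- injectivity of pt on range n
  have hinj : ∀ a ∈ Finset.range n, ∀ b ∈ Finset.range n,
      pt d n v δ a = pt d n v δ b → a = b := by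
    intro a ha b hb hab
    rw [Finset.mem_range] at ha hb
    set k0 : Fin d := ⟨0, hd⟩
    have h1 := congrFun hab k0
    unfold pt at h1
    have h2 : (((a:ℤ) * v k0 + δ k0) % (n:ℤ)) = (((b:ℤ) * v k0 + δ k0) % (n:ℤ)) := by
      field_simp at h1
      have h1' : ((((a:ℤ) * v k0 + δ k0) % (n:ℤ) : ℤ) : ℝ) = ((((b:ℤ) * v k0 + δ k0) % (n:ℤ) : ℤ) : ℝ) := by
        linarith
      exact_mod_cast h1'
    have h3 : ((a:ℤ) * v k0 + δ k0) ≡ ((b:ℤ) * v k0 + δ k0) [ZMOD (n:ℤ)] := h2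
    have h4 : ((a:ℤ) * v k0) ≡ ((b:ℤ) * v k0) [ZMOD (n:ℤ)] := by
      have := h3.sub_right (δ k0)
      simpa using this
    have h5 : (n:ℤ) ∣ ((b:ℤ) - a) * v k0 := by
      have := h4.dvd
      rwa [show (b:ℤ) * v k0 - (a:ℤ) * v k0 = ((b:ℤ) - a) * v k0 by ring] at this
    have h6 : (n:ℤ) ∣ ((b:ℤ) - a) := (hco k0).symm.dvd_of_dvd_mul_right h5
    have h7 : ((b:ℤ) - a) = 0 := by
      refine Int.eq_zero_of_abs_lt_dvd h6 ?_
      rw [abs_lt]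
      constructor <;> push_cast <;> omega
    omega
  -- the design set equals the finset T
  have hST : S = ↑T := by
    rw [hS, hT]
    ext x
    constructor
    · intro hx
      obtain ⟨⟨z, i, rfl⟩, hbd⟩ := hx
      have hem0 : 0 ≤ i % (n:ℤ) := Int.emod_nonneg i (ne_of_gt hnpos)
      have hem1 : i % (n:ℤ) < n := Int.emod_lt_of_pos i hnpos
      refine Finset.mem_coe.mpr (Finset.mem_image.mpr
        ⟨(i % (n:ℤ)).toNat, Finset.mem_range.mpr (by omega), ?_⟩)
      funext k
      set M : ℤ := n * z k + i * v k + δ k with hM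
      have hxk : (z k : ℝ) + (i : ℝ) * (v k : ℝ) / n + (δ k : ℝ) / n + 1 / (2 * n)
          = ((M:ℝ) + 1/2) / n := by
        rw [hM]; push_cast; field_simp
      obtain ⟨hb0, hb1⟩ := hbd k
      simp only [hxk] at hb0 hb1
      have hb0' : (0:ℝ) ≤ (M:ℝ) + 1/2 := by
        have := (le_div_iff₀ hnR).mp hb0
        linarith
      have hb1' : (M:ℝ) + 1/2 ≤ (n:ℝ) := by
        have := (div_le_one hnR).mp hb1
        linarith
      have hM0 : 0 ≤ M := by
        by_contra h
        push_neg at h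
        have : M ≤ -1 := by omega
        have hr : (M:ℝ) ≤ -1 := by exact_mod_cast this
        linarith
      have hMn : M < n := by
        by_contra h
        push_neg at h
        have hr : (n:ℝ) ≤ (M:ℝ) := by exact_mod_cast h
        linarith
      have hmi : ((((i % (n:ℤ)).toNat : ℕ) : ℤ)) ≡ i [ZMOD (n:ℤ)] := by
        rw [Int.toNat_of_nonneg hem0]
        exact Int.emod_emod_of_dvd i dvd_rfl
      have hcong : ((((i % (n:ℤ)).toNat : ℕ) : ℤ) * v k + δ k) % (n:ℤ) = M := by
        have h2 : ((((i % (n:ℤ)).toNat : ℕ) : ℤ) * v k + δ k) ≡ (i * v k + δ k) [ZMOD (n:ℤ)] :=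
          (hmi.mul_right (v k)).add_right (δ k)
        have h3 : (i * v k + δ k) ≡ M [ZMOD (n:ℤ)] :=
          Int.modEq_iff_dvd.mpr ⟨z k, by rw [hM]; ring⟩
        have h4 := h2.trans h3
        calc ((((i % (n:ℤ)).toNat : ℕ) : ℤ) * v k + δ k) % (n:ℤ) = M % n := h4
          _ = M := Int.emod_eq_of_lt hM0 hMn
      show pt d n v δ (i % (n:ℤ)).toNat k = _
      unfold pt
      rw [hcong]
      exact hxk.symm
    · intro hx
      obtain ⟨m, hm, rfl⟩ := Finset.mem_image.mp (Finset.mem_coe.mp hx)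
      constructor
      · refine ⟨fun k => -(((m:ℤ) * v k + δ k) / n), (m:ℤ), ?_⟩
        funext k
        unfold pt
        rw [Int.emod_def]
        push_cast
        field_simp
        ring
      · intro k
        unfold pt
        have hr0 : (0:ℤ) ≤ ((m:ℤ) * v k + δ k) % (n:ℤ) :=
          Int.emod_nonneg _ (ne_of_gt hnpos)
        have hr1 : ((m:ℤ) * v k + δ k) % (n:ℤ) < n := Int.emod_lt_of_pos _ hnpos
        have hr0' : (0:ℝ) ≤ ((((m:ℤ) * v k + δ k) % (n:ℤ) : ℤ) : ℝ) := by exact_mod_cast hr0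
        have hr1' : ((((m:ℤ) * v k + δ k) % (n:ℤ) : ℤ) : ℝ) ≤ (n:ℝ) - 1 := by
          have : ((m:ℤ) * v k + δ k) % (n:ℤ) ≤ (n:ℤ) - 1 := by omega
          exact_mod_cast this
        constructor
        · apply div_nonneg _ (le_of_lt hnR)
          linarith
        · rw [div_le_one hnR]
          linarith
  -- convert finsums into finset sums
  have hsum : (∑ᶠ x ∈ S, ∑ᶠ y ∈ S, ∏ k, ((1.25 : ℝ) + nid (x k - y k + 1 / 2) ^ 2))
      = ∑ x ∈ T, ∑ y ∈ T, ∏ k, ((1.25 : ℝ) + nid (x k - y k + 1 / 2) ^ 2) := by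
    rw [hST, finsum_mem_coe_finset]
    exact Finset.sum_congr rfl fun x _ => finsum_mem_coe_finset _ _
  -- double sum over indices
  have hdouble : ∑ x ∈ T, ∑ y ∈ T, ∏ k, ((1.25 : ℝ) + nid (x k - y k + 1 / 2) ^ 2)
      = ∑ i ∈ Finset.range n, ∑ j ∈ Finset.range n, gfun d n v ((i:ℤ) - (j:ℤ)) := by
    rw [hT, Finset.sum_image hinj]
    refine Finset.sum_congr rfl fun i _ => ?_
    rw [Finset.sum_image hinj]
    refine Finset.sum_congr rfl fun j _ => ?_
    unfold gfun
    refine Finset.prod_congr rfl fun k _ => ?_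
    congr 2
    apply nid_eq_of_int_sub
      (((j:ℤ) * v k + δ k) / n - ((i:ℤ) * v k + δ k) / n)
    unfold pt
    rw [Int.emod_def, Int.emod_def]
    push_cast
    field_simp
    ring
  have hrows : ∑ i ∈ Finset.range n, ∑ j ∈ Finset.range n, gfun d n v ((i:ℤ) - (j:ℤ))
      = (n:ℝ) * ∑ m ∈ Finset.range n, gfun d n v m := by
    calc ∑ i ∈ Finset.range n, ∑ j ∈ Finset.range n, gfun d n v ((i:ℤ) - (j:ℤ))
        = ∑ _i ∈ Finset.range n, ∑ m ∈ Finset.range n, gfun d n v m :=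
          Finset.sum_congr rfl fun i _ => sum_gfun_shifted d n v ((i:ℤ))
      _ = (n:ℝ) * ∑ m ∈ Finset.range n, gfun d n v m := by
          rw [Finset.sum_const, nsmul_eq_mul, Finset.card_range]
  -- right-hand side single sum
  have hrhs : ∑ i ∈ Finset.Icc 1 n,
      ∏ k, ((1.25 : ℝ) + nid ((i : ℝ) * (v k : ℝ) / n - 1 / 2) ^ 2)
      = ∑ m ∈ Finset.range n, gfun d n v m := by
    rw [← sum_gfun_icc d n v]
    refine Finset.sum_congr rfl fun i _ => ?_
    unfold gfun
    refine Finset.prod_congr rfl fun k _ => ?_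
    congr 2
    apply nid_eq_of_int_sub (-1)
    push_cast
    ring
  have hmain : (1 / (n : ℝ) ^ 2) * (∑ᶠ x ∈ S, ∑ᶠ y ∈ S,
        ∏ k, ((1.25 : ℝ) + nid (x k - y k + 1 / 2) ^ 2))
      = (1 / (n : ℝ)) * ∑ i ∈ Finset.Icc 1 n,
          ∏ k, ((1.25 : ℝ) + nid ((i : ℝ) * (v k : ℝ) / n - 1 / 2) ^ 2) := by
    rw [hsum, hdouble, hrows, hrhs]
    field_simp
  exact ⟨hmain, by rw [hmain]⟩
end
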